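/- Intertwining relation: for x, x' ∈ W^{n+1} (strictly increasing integer vectors of length n+1) and y' interlacing with x', Σ_{y ∈ W^n(x)} λ^n(x,y) q_t^{n,+}((x,y),(x',y')) = p_t^{n+1,+}(x,x') λ^n(x',y'), where λ^n(x,y) = n! h_n(y)/h_{n+1}(x), q_t^{n,+} = (h_n(y')/h_n(y)) q_t^n is the h-transformed determinantal kernel, and p_t^{n+1,+}(x,x') = (h_{n+1}(x')/h_{n+1}(x)) det[φ^{(t)}(x'_j − x_i)]_{1≤i,j≤n+1}. -/

import Mathlib

open Matrix BigOperators

/-- Kronecker delta `δ_i : ℤ → ℝ`. -/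
noncomputable def deltaK (i : ℤ) : ℤ → ℝ := fun x => if x = i then 1 else 0

/-- Convolution `(f * g)(x) = Σ_{s+t=x} f(s) g(t)`. -/
noncomputable def conv (f g : ℤ → ℝ) : ℤ → ℝ := fun x => ∑' s : ℤ, f s * g (x - s)

/-- The Bernoulli(1/2) step distribution `φ = (δ_0 + δ_1)/2`. -/
noncomputable def phiB : ℤ → ℝ := fun x => (deltaK 0 x + deltaK 1 x) / 2

/-- `t`-fold convolution power of `φ`. -/
noncomputable def phiPow : ℕ → ℤ → ℝ
  | 0 => deltaK 0
  | (n+1) => conv (phiPow n) phiB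

/-- `Δ⁻¹ f (x) = Σ_{z ≤ x} f(z)`. -/
noncomputable def Dinv (f : ℤ → ℝ) (x : ℤ) : ℝ := ∑' z : {z : ℤ // z ≤ x}, f z.1

/-- Backward difference `Δ f (x) = f(x) - f(x-1)`. -/
noncomputable def Dd (f : ℤ → ℝ) (x : ℤ) : ℝ := f x - f (x - 1)

/-- Vandermonde product `h_n(z) = Π_{i<j} (z_j - z_i)` (real valued). -/
noncomputable def vand (n : ℕ) (z : Fin n → ℤ) : ℝ :=
  ∏ i : Fin n, ∏ j ∈ Finset.Ioi i, ((z j - z i : ℤ) : ℝ)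

/-- The interlacing cone `W^{n+1,n}`: `x_1 ≤ y_1 < x_2 ≤ … ≤ y_n < x_{n+1}`. -/
def interlace (n : ℕ) (x : Fin (n+1) → ℤ) (y : Fin n → ℤ) : Prop :=
  ∀ i : Fin n, x i.castSucc ≤ y i ∧ y i < x i.succ

/-- The determinantal kernel `q_t^n((x,y),(x',y'))` (rows indexed by the starting
point `(x,y)`, columns by the end point `(x',y')`). -/
noncomputable def qker (n t : ℕ) (x : Fin (n+1) → ℤ) (y : Fin n → ℤ)
    (x' : Fin (n+1) → ℤ) (y' : Fin n → ℤ) : ℝ :=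
  (Matrix.fromBlocks
    (Matrix.of fun i j : Fin (n+1) => phiPow t (x' j - x i))
    (Matrix.of fun (i : Fin (n+1)) (j : Fin n) =>
      Dinv (phiPow t) (y' j - x i) - if (i : ℕ) ≤ (j : ℕ) then 1 else 0)
    (Matrix.of fun (i : Fin n) (j : Fin (n+1)) => Dd (phiPow t) (x' j - y i))
    (Matrix.of fun i j : Fin n => phiPow t (y' j - y i))).det

/-- `λ^n(x,y) = n! h_n(y)/h_{n+1}(x)`. -/
noncomputable def lam (n : ℕ) (x : Fin (n+1) → ℤ) (y : Fin n → ℤ) : ℝ :=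
  (n.factorial : ℝ) * vand n y / vand (n+1) x

/-- `p_t^{n,+}(y,y') = (h_n(y')/h_n(y)) det[φ^{(t)}(y'_j - y_i)]`. -/
noncomputable def pplus (n t : ℕ) (y y' : Fin n → ℤ) : ℝ :=
  (vand n y' / vand n y) * (Matrix.of fun i j : Fin n => phiPow t (y' j - y i)).det



lemma conv_phiB (f : ℤ → ℝ) (x : ℤ) : conv f phiB x = (f x + f (x-1))/2 := by
  have h : ∀ s : ℤ, s ∉ ({x-1, x} : Finset ℤ) → f s * phiB (x - s) = 0 := by
    intro s hs
    simp only [Finset.mem_insert, Finset.mem_singleton] at hs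
    push_neg at hs
    have h1 : x - s ≠ 0 := by omega
    have h2 : x - s ≠ 1 := by omega
    simp [phiB, deltaK, h1, h2]
  rw [show conv f phiB x = ∑' s : ℤ, f s * phiB (x - s) from rfl, tsum_eq_sum h]
  rw [Finset.sum_insert (by simp), Finset.sum_singleton]
  simp [phiB, deltaK]
  ring

lemma phiPow_support (t : ℕ) (z : ℤ) (h : z < 0 ∨ (t:ℤ) < z) : phiPow t z = 0 := by
  induction t generalizing z with
  | zero => have : z ≠ 0 := by omega
            simp [phiPow, deltaK, this]
  | succ n ih =>
    rw [show phiPow (n+1) z = conv (phiPow n) phiB z from rfl, conv_phiB]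
    rw [ih z (by omega), ih (z-1) (by omega)]
    norm_num

lemma dinv_fin (t : ℕ) (w : ℤ) :
    Dinv (phiPow t) w = ∑ z ∈ (Finset.Icc (0:ℤ) t).filter (· ≤ w), phiPow t z := by
  have h : ∀ b : {z : ℤ // z ≤ w}, b ∉ (Finset.Icc (0:ℤ) t).subtype (· ≤ w) →
      phiPow t b.1 = 0 := by
    intro b hb
    rw [Finset.mem_subtype] at hb
    rw [Finset.mem_Icc] at hb
    exact phiPow_support t b.1 (by omega)
  rw [show Dinv (phiPow t) w = ∑' z : {z : ℤ // z ≤ w}, phiPow t z.1 from rfl,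
    tsum_eq_sum h, Finset.sum_subtype_eq_sum_filter]

lemma dinv_step (t : ℕ) (w : ℤ) :
    Dinv (phiPow t) w = Dinv (phiPow t) (w-1) + phiPow t w := by
  rw [dinv_fin, dinv_fin]
  by_cases hw : w ∈ Finset.Icc (0:ℤ) t
  · have he : (Finset.Icc (0:ℤ) t).filter (· ≤ w)
        = insert w ((Finset.Icc (0:ℤ) t).filter (· ≤ w - 1)) := by
      ext z
      simp only [Finset.mem_filter, Finset.mem_insert, Finset.mem_Icc] at *
      omega
    rw [he, Finset.sum_insert (by simp)]
    ring
  · have h0 : phiPow t w = 0 := by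
      rw [Finset.mem_Icc] at hw; exact phiPow_support t w (by omega)
    have he : (Finset.Icc (0:ℤ) t).filter (· ≤ w)
        = (Finset.Icc (0:ℤ) t).filter (· ≤ w - 1) := by
      ext z
      simp only [Finset.mem_filter, Finset.mem_Icc] at *
      omega
    rw [he, h0]; ring

lemma ico_ins (a b : ℤ) (h : a ≤ b) :
    Finset.Ico a (b+1) = insert b (Finset.Ico a b) := by
  ext z; simp only [Finset.mem_Ico, Finset.mem_insert]; omega

lemma sum_Dd (f : ℤ → ℝ) (c a b : ℤ) (h : a ≤ b) :
    ∑ z ∈ Finset.Ico a b, Dd f (c - z) = f (c - a) - f (c - b) := by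
  refine Int.le_induction (motive := fun b _ =>
    ∑ z ∈ Finset.Ico a b, Dd f (c - z) = f (c - a) - f (c - b)) (by simp) ?_ b h
  intro b hb ih
  ·
    rw [ico_ins a b hb, Finset.sum_insert (by simp)]
    rw [ih]
    simp only [Dd]
    have : c - b - 1 = c - (b+1) := by ring
    rw [this]; ring

lemma sum_phi (t : ℕ) (c a b : ℤ) (h : a ≤ b) :
    ∑ z ∈ Finset.Ico a b, phiPow t (c - z)
      = Dinv (phiPow t) (c - a) - Dinv (phiPow t) (c - b) := by
  refine Int.le_induction (motive := fun b _ =>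
    ∑ z ∈ Finset.Ico a b, phiPow t (c - z)
      = Dinv (phiPow t) (c - a) - Dinv (phiPow t) (c - b)) (by simp) ?_ b h
  intro b hb ih
  ·
    rw [ico_ins a b hb, Finset.sum_insert (by simp), ih]
    have := dinv_step t (c - b)
    have h2 : c - b - 1 = c - (b+1) := by ring
    rw [h2] at this
    rw [this]; ring

section Key
variable (n t : ℕ) (x x' : Fin (n+1) → ℤ) (y' : Fin n → ℤ)

/-- Top-left block. -/
noncomputable def Ablk : Matrix (Fin (n+1)) (Fin (n+1)) ℝ :=
  Matrix.of fun i j => phiPow t (x' j - x i)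

noncomputable def Bblk : Matrix (Fin (n+1)) (Fin n) ℝ :=
  Matrix.of fun i j => Dinv (phiPow t) (y' j - x i) - if (i : ℕ) ≤ (j : ℕ) then 1 else 0

/-- rows of the kernel matrix for lower point `y`. -/
noncomputable def rowsM (y : Fin n → ℤ) : Matrix (Fin (n+1) ⊕ Fin n) (Fin (n+1) ⊕ Fin n) ℝ :=
  Matrix.fromBlocks (Ablk n t x x') (Bblk n t x y')
    (Matrix.of fun (i : Fin n) (j : Fin (n+1)) => Dd (phiPow t) (x' j - y i))
    (Matrix.of fun i j : Fin n => phiPow t (y' j - y i))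

lemma qker_eq (y : Fin n → ℤ) : qker n t x y x' y' = (rowsM n t x x' y' y).det := rfl

/-- bottom row as function of `z`. -/
noncomputable def botRow (z : ℤ) : (Fin (n+1) ⊕ Fin n) → ℝ :=
  Sum.elim (fun j => Dd (phiPow t) (x' j - z)) (fun j => phiPow t (y' j - z))

/-- row selector for multilinearity -/
noncomputable def gRow : (Fin (n+1) ⊕ Fin n) → ℤ → ((Fin (n+1) ⊕ Fin n) → ℝ)
  | Sum.inl i => fun _ => Sum.elim (fun j => Ablk n t x x' i j) (fun j => Bblk n t x y' i j)
  | Sum.inr _ => fun z => botRow n t x' y' z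

noncomputable def AF : (Fin (n+1) ⊕ Fin n) → Finset ℤ :=
  Sum.elim (fun _ => {0}) (fun i => Finset.Ico (x i.castSucc) (x i.succ))

/-- the lower-left correction matrix -/
noncomputable def Cblk : Matrix (Fin n) (Fin (n+1)) ℝ :=
  Matrix.of fun i j => (if j = i.castSucc then (1:ℝ) else 0) - (if j = i.succ then 1 else 0)

lemma det_summed (hx : StrictMono x) :
    (Matrix.fromBlocks (Ablk n t x x') (Bblk n t x y')
      (Matrix.of fun (i : Fin n) (j : Fin (n+1)) =>
        Ablk n t x x' i.castSucc j - Ablk n t x x' i.succ j)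
      (Matrix.of fun (i : Fin n) (j : Fin n) =>
        Dinv (phiPow t) (y' j - x i.castSucc) - Dinv (phiPow t) (y' j - x i.succ))).det
    = (Ablk n t x x').det := by
  classical
  have hC : (Matrix.of fun (i : Fin n) (j : Fin (n+1)) =>
        Ablk n t x x' i.castSucc j - Ablk n t x x' i.succ j)
      = Cblk n * Ablk n t x x' := by
    ext i j
    simp only [Matrix.mul_apply, Cblk, Matrix.of_apply, sub_mul, ite_mul, one_mul, zero_mul]
    rw [Finset.sum_sub_distrib]
    simp [Finset.sum_ite_eq]
  have hD : (Matrix.of fun (i : Fin n) (j : Fin n) =>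
        Dinv (phiPow t) (y' j - x i.castSucc) - Dinv (phiPow t) (y' j - x i.succ))
      = Cblk n * Bblk n t x y' + 1 := by
    ext i j
    simp only [Matrix.add_apply, Matrix.mul_apply, Cblk, Matrix.of_apply, sub_mul, ite_mul,
      one_mul, zero_mul, Matrix.one_apply]
    rw [Finset.sum_sub_distrib]
    simp only [Finset.sum_ite_eq, Finset.sum_ite_eq', Finset.mem_univ, if_true]
    simp only [Bblk, Matrix.of_apply]
    have h1 : ((i.castSucc : Fin (n+1)) : ℕ) = (i : ℕ) := rfl
    have h2 : ((i.succ : Fin (n+1)) : ℕ) = (i : ℕ) + 1 := rfl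
    have h3 : (i = j) ↔ ((i:ℕ) = (j:ℕ)) := Fin.ext_iff
    by_cases hij : i = j
    · subst hij
      simp only [Fin.coe_castSucc, Fin.val_succ, le_refl, if_true, if_pos rfl]
      rw [if_neg (by omega)]
      ring
    · have hids : ¬ (i:ℕ) = (j:ℕ) := fun h => hij (Fin.ext h)
      have hiff : (((i.castSucc : Fin (n+1)):ℕ) ≤ (j:ℕ)) ↔ (((i.succ : Fin (n+1)):ℕ) ≤ (j:ℕ)) := by
        simp only [Fin.coe_castSucc, Fin.val_succ]
        omega
      rw [if_neg hij, if_congr hiff rfl rfl]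
      ring
  have hfac : Matrix.fromBlocks (Ablk n t x x') (Bblk n t x y')
      (Matrix.of fun (i : Fin n) (j : Fin (n+1)) =>
        Ablk n t x x' i.castSucc j - Ablk n t x x' i.succ j)
      (Matrix.of fun (i : Fin n) (j : Fin n) =>
        Dinv (phiPow t) (y' j - x i.castSucc) - Dinv (phiPow t) (y' j - x i.succ))
    = (Matrix.fromBlocks 1 0 (Cblk n) 1) * (Matrix.fromBlocks (Ablk n t x x') (Bblk n t x y') 0 1) := by
    rw [Matrix.fromBlocks_multiply]
    simp only [Matrix.one_mul, Matrix.zero_mul, Matrix.mul_zero, Matrix.mul_one, add_zero,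
      zero_add]
    rw [hC, hD]
  rw [hfac, Matrix.det_mul, Matrix.det_fromBlocks_zero₁₂, Matrix.det_fromBlocks_zero₂₁]
  simp

lemma qsum (hx : StrictMono x) :
    ∑' y : {y : Fin n → ℤ // interlace n x y}, qker n t x y.1 x' y'
      = (Ablk n t x x').det := by
  classical
  set T : Finset (Fin n → ℤ) :=
    Fintype.piFinset (fun i : Fin n => Finset.Ico (x i.castSucc) (x i.succ)) with hT
  have hmem : ∀ y : Fin n → ℤ, y ∈ T ↔ interlace n x y := by
    intro y
    simp only [hT, Fintype.mem_piFinset, Finset.mem_Ico]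
    rfl
  -- step 1 : tsum to finite sum over T
  have step1 : ∑' y : {y : Fin n → ℤ // interlace n x y}, qker n t x y.1 x' y'
      = ∑ y ∈ T, qker n t x y x' y' := by
    haveI : Fintype {y // interlace n x y} := Fintype.subtype T hmem
    rw [tsum_fintype]
    exact (Finset.sum_subtype T hmem (fun y => qker n t x y x' y')).symm
  rw [step1]
  -- step 2 : multilinearity
  have hms := (Matrix.detRowAlternating :
      ((Fin (n+1) ⊕ Fin n) → ℝ) [⋀^(Fin (n+1) ⊕ Fin n)]→ₗ[ℝ] ℝ).toMultilinearMap.map_sum_finset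
      (gRow n t x x' y') (AF n x)
  have hL : (fun i => ∑ z ∈ AF n x i, gRow n t x x' y' i z)
      = Matrix.fromBlocks (Ablk n t x x') (Bblk n t x y')
        (Matrix.of fun (i : Fin n) (j : Fin (n+1)) =>
          Ablk n t x x' i.castSucc j - Ablk n t x x' i.succ j)
        (Matrix.of fun (i : Fin n) (j : Fin n) =>
          Dinv (phiPow t) (y' j - x i.castSucc) - Dinv (phiPow t) (y' j - x i.succ)) := by
    funext i
    cases i with
    | inl i =>
      simp only [AF, Sum.elim_inl, Finset.sum_singleton, gRow]
      funext j
      cases j <;> rfl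
    | inr i =>
      funext j
      have hle : x i.castSucc ≤ x i.succ := le_of_lt (hx (Fin.castSucc_lt_succ (i := i)))
      simp only [AF, Sum.elim_inr, gRow, Finset.sum_apply]
      cases j with
      | inl j =>
        simp only [botRow, Sum.elim_inl]
        rw [sum_Dd (phiPow t) (x' j) _ _ hle]
        rfl
      | inr j =>
        simp only [botRow, Sum.elim_inr]
        rw [sum_phi t (y' j) _ _ hle]
        rfl
  rw [hL] at hms
  -- rows of individual terms
  have hR : ∀ r : (Fin (n+1) ⊕ Fin n) → ℤ,
      (Matrix.detRowAlternating (fun i => gRow n t x x' y' i (r i)) : ℝ)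
        = qker n t x (fun k => r (Sum.inr k)) x' y' := by
    intro r
    rw [qker_eq]
    show _ = Matrix.detRowAlternating _
    congr 1
    funext i
    cases i with
    | inl i =>
      funext j
      cases j <;> rfl
    | inr i =>
      funext j
      cases j <;> rfl
  -- bijection between piFinset AF and T
  have step2 : ∑ r ∈ Fintype.piFinset (AF n x),
        (Matrix.detRowAlternating (fun i => gRow n t x x' y' i (r i)) : ℝ)
      = ∑ y ∈ T, qker n t x y x' y' := by
    refine Finset.sum_nbij' (fun r => fun k => r (Sum.inr k))
      (fun y => Sum.elim (fun _ => (0:ℤ)) y) ?_ ?_ ?_ ?_ ?_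
    · intro r hr
      rw [Fintype.mem_piFinset] at hr
      rw [hT, Fintype.mem_piFinset]
      intro k
      exact hr (Sum.inr k)
    · intro y hy
      rw [hT, Fintype.mem_piFinset] at hy
      rw [Fintype.mem_piFinset]
      intro i
      cases i with
      | inl i => simp [AF]
      | inr i => exact hy i
    · intro r hr
      rw [Fintype.mem_piFinset] at hr
      funext i
      cases i with
      | inl i =>
        have := hr (Sum.inl i)
        simp only [AF, Sum.elim_inl, Finset.mem_singleton] at this
        simp [this]
      | inr i => rfl
    · intro y hy
      rfl
    · intro r hr
      exact hR r
  simp only [AlternatingMap.coe_multilinearMap] at hms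
  rw [← step2, ← hms]
  exact det_summed n t x x' y' hx
end Key



lemma vand_pos (m : ℕ) (z : Fin m → ℤ) (hz : StrictMono z) : 0 < vand m z := by
  refine Finset.prod_pos fun i _ => Finset.prod_pos fun j hj => ?_
  have : z i < z j := hz (Finset.mem_Ioi.1 hj)
  exact_mod_cast sub_pos.2 this

lemma interlace_upper_mono (n : ℕ) (x : Fin (n+1) → ℤ) (y : Fin n → ℤ)
    (h : interlace n x y) : StrictMono x → True := fun _ => trivial

lemma interlace_strictMono_upper (n : ℕ) (x : Fin (n+1) → ℤ) (y : Fin n → ℤ)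
    (h : interlace n x y) : StrictMono x := by
  rw [Fin.strictMono_iff_lt_succ]
  intro i
  exact lt_of_le_of_lt (h i).1 (h i).2

lemma interlace_strictMono_lower (n : ℕ) (x : Fin (n+1) → ℤ) (y : Fin n → ℤ)
    (h : interlace n x y) (hx : StrictMono x) : StrictMono y := by
  intro i j hij
  have h1 : y i < x i.succ := (h i).2
  have h2 : x j.castSucc ≤ y j := (h j).1
  have h3 : x i.succ ≤ x j.castSucc := by
    apply hx.monotone
    rw [Fin.le_def]
    simp only [Fin.val_succ, Fin.coe_castSucc]
    exact hij
  omega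


/-- the intertwining relation
`Σ_y λ^n(x,y) q_t^{n,+}((x,y),(x',y')) = p_t^{n+1,+}(x,x') λ^n(x',y')`. -/
theorem intertwining (n t : ℕ) (x x' : Fin (n+1) → ℤ) (y' : Fin n → ℤ)
    (hx : StrictMono x) (hx' : interlace n x' y') :
    ∑' y : {y : Fin n → ℤ // interlace n x y},
        lam n x y.1 * ((vand n y' / vand n y.1) * qker n t x y.1 x' y')
      = pplus (n+1) t x x' * lam n x' y' := by
  have hvx : vand (n+1) x ≠ 0 := ne_of_gt (vand_pos _ x hx)
  have hx's : StrictMono x' := interlace_strictMono_upper n x' y' hx'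
  have hvx' : vand (n+1) x' ≠ 0 := ne_of_gt (vand_pos _ x' hx's)
  set c : ℝ := (n.factorial : ℝ) * vand n y' / vand (n+1) x with hc
  have hterm : ∀ y : {y : Fin n → ℤ // interlace n x y},
      lam n x y.1 * ((vand n y' / vand n y.1) * qker n t x y.1 x' y')
        = c * qker n t x y.1 x' y' := by
    intro y
    have hvy : vand n y.1 ≠ 0 :=
      ne_of_gt (vand_pos _ y.1 (interlace_strictMono_lower n x y.1 y.2 hx))
    rw [lam, hc]
    field_simp
  rw [tsum_congr hterm, tsum_mul_left, qsum n t x x' y' hx]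
  rw [pplus, lam, hc]
  have : (Matrix.of fun i j : Fin (n+1) => phiPow t (x' j - x i)).det = (Ablk n t x x').det := rfl
  rw [this]
  field_simp
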